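/- Let $q\in(0,1)$ with $q > 1/\big(1+(1-1/p)^p\big)$ for some $p>1$. Let $X,Y$ be i.i.d. Bernoulli with $P(X=1)=q$, $F$ their distribution function, and $\psi(0)=1$, $\psi(1)=0$. Then $E\big[\big(E(\psi(Y)1_{[Y<X]}\mid X)/F(X-)\big)^p\big] = q > \left(\frac{p}{p-1}\right)^p(1-q) = \left(\frac{p}{p-1}\right)^p E[\psi(Y)^p]$, with the convention $0/0=0$. Hence Hardy's inequality fails when $(1_{[Y\le X]},F(X))$ is replaced by $(1_{[Y<X]},F(X-))$. -/

import Mathlib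

open MeasureTheory Set ENNReal

/-- Counterexample: for Bernoulli distributions with large success probability
`q`, the variant of Hardy's inequality with `(1_{[Y < X]}, F(X-))` in place of
`(1_{[Y ≤ X]}, F(X))` fails (with the convention `0/0 = 0`). -/
theorem hardy_left_limit_counterexample (p q : ℝ) (hp : 1 < p)
    (hq : 1 / (1 + (1 - 1 / p) ^ p) < q) (hq1 : q < 1)
    (μ : Measure ℝ)
    (hμ : μ = ENNReal.ofReal (1 - q) • Measure.dirac 0
            + ENNReal.ofReal q • Measure.dirac 1)
    (ψ : ℝ → ℝ≥0∞) (hψ : Measurable ψ) (hψ0 : ψ 0 = 1) (hψ1 : ψ 1 = 0) :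
    (∫⁻ x, ((∫⁻ y in Iio x, ψ y ∂μ) / μ (Iio x)) ^ p ∂μ = ENNReal.ofReal q)
    ∧ ENNReal.ofReal ((p / (p - 1)) ^ p) * (∫⁻ y, ψ y ^ p ∂μ)
        < ENNReal.ofReal q
    ∧ (∫⁻ y, ψ y ^ p ∂μ) = ENNReal.ofReal (1 - q) := by
  have hp0 : 0 < p := lt_trans one_pos hp
  have hp1 : 0 < 1 - 1 / p := by
    have : 1 / p < 1 := by
      rw [div_lt_one hp0]; exact hp
    linarith
  have hcpos : (0:ℝ) < (1 - 1 / p) ^ p := Real.rpow_pos_of_pos hp1 p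
  have hq0 : (0:ℝ) < q := lt_trans (by positivity) hq
  have h1q : (0:ℝ) < 1 - q := by linarith
  have h1q0 : ENNReal.ofReal (1 - q) ≠ 0 := by
    simp [ENNReal.ofReal_eq_zero]; linarith
  have key : ∀ f : ℝ → ℝ≥0∞,
      ∫⁻ x, f x ∂μ = ENNReal.ofReal (1 - q) * f 0 + ENNReal.ofReal q * f 1 := by
    intro f
    rw [hμ, lintegral_add_measure, lintegral_smul_measure, lintegral_smul_measure,
      lintegral_dirac, lintegral_dirac]
    simp only [smul_eq_mul]
  have hIio0 : μ (Iio (0:ℝ)) = 0 := by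
    rw [hμ]
    simp [Measure.dirac_apply' _ measurableSet_Iio]
  have hIio1 : μ (Iio (1:ℝ)) = ENNReal.ofReal (1 - q) := by
    rw [hμ]
    simp [Measure.dirac_apply' _ measurableSet_Iio]
  have hint0 : ∫⁻ y in Iio (0:ℝ), ψ y ∂μ = 0 := by
    rw [Measure.restrict_eq_zero.mpr hIio0, lintegral_zero_measure]
  have hint1 : ∫⁻ y in Iio (1:ℝ), ψ y ∂μ = ENNReal.ofReal (1 - q) := by
    rw [hμ, Measure.restrict_add, Measure.restrict_smul, Measure.restrict_smul,
      lintegral_add_measure, lintegral_smul_measure, lintegral_smul_measure,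
      setLIntegral_dirac ψ, setLIntegral_dirac ψ]
    simp [hψ0, hψ1]
  have hpsi : (∫⁻ y, ψ y ^ p ∂μ) = ENNReal.ofReal (1 - q) := by
    rw [key (fun y => ψ y ^ p)]
    simp [hψ0, hψ1, ENNReal.zero_rpow_of_pos hp0]
  have houter : ∫⁻ x, ((∫⁻ y in Iio x, ψ y ∂μ) / μ (Iio x)) ^ p ∂μ
      = ENNReal.ofReal q := by
    rw [key (fun x => ((∫⁻ y in Iio x, ψ y ∂μ) / μ (Iio x)) ^ p)]
    simp only [hint0, hint1, hIio0, hIio1]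
    rw [ENNReal.div_self h1q0 ENNReal.ofReal_ne_top]
    simp [ENNReal.zero_rpow_of_pos hp0]
  refine ⟨houter, ?_, hpsi⟩
  have hpm0 : (0:ℝ) < p - 1 := by linarith
  have hnn : (0:ℝ) ≤ (p / (p - 1)) ^ p :=
    le_of_lt (Real.rpow_pos_of_pos (div_pos hp0 hpm0) p)
  rw [hpsi, ← ENNReal.ofReal_mul hnn]
  rw [ENNReal.ofReal_lt_ofReal_iff hq0]
  -- real inequality: (p/(p-1))^p * (1-q) < q
  have hpm : (0:ℝ) < p - 1 := by linarith
  have hcpos' : (0:ℝ) < (p / (p - 1)) ^ p := Real.rpow_pos_of_pos (div_pos hp0 hpm) p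
  have h1 : (1 - 1 / p) = (p / (p - 1))⁻¹ := by field_simp
  have hc : (1 - 1 / p) ^ p = ((p / (p - 1)) ^ p)⁻¹ := by
    rw [h1, ← Real.inv_rpow (le_of_lt (div_pos hp0 hpm))]
  rw [hc] at hq
  set c := (p / (p - 1)) ^ p with hcdef
  have hc0 : (0:ℝ) < c := hcpos'
  have h2 : 1 < q * (1 + c⁻¹) := by
    have hpos : (0:ℝ) < 1 + c⁻¹ := by positivity
    rw [div_lt_iff₀ hpos] at hq
    linarith
  have h3 : q * c⁻¹ * c = q := by field_simp
  nlinarith
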